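/- Let G be a finite set of nonzero polynomials and let p be a nonzero polynomial admitting a representation p = Σ_k h_k g_k with g_k ∈ G. If for every index k with lm(h_k)·lm(g_k) > lm(p) there exists an index ℓ ≠ k with lm(h_k)·lm(g_k) = lm(h_ℓ)·lm(g_ℓ), and every S-polynomial of elements of G has a standard representation with respect to G, then p has a standard representation with respect to G. -/

import Mathlib

open scoped MonomialOrder

namespace F5

variable {σ K : Type*} [Field K] (mo : MonomialOrder σ)

/-- leading monomial (exponent) of a polynomial w.r.t. a monomial order -/
noncomputable def lm (p : MvPolynomial σ K) : σ →₀ ℕ :=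
  mo.toSyn.symm (p.support.sup fun d => mo.toSyn d)

/-- leading coefficient -/
noncomputable def lc (p : MvPolynomial σ K) : K := p.coeff (lm mo p)

/-- S-polynomial -/
noncomputable def Spoly (p q : MvPolynomial σ K) : MvPolynomial σ K :=
  MvPolynomial.monomial ((lm mo p ⊔ lm mo q) - lm mo p) (lc mo q) * p -
    MvPolynomial.monomial ((lm mo p ⊔ lm mo q) - lm mo q) (lc mo p) * q

/-- standard representation of `p` w.r.t. the finite set `G` -/
def HasStdRep (G : Finset (MvPolynomial σ K)) (p : MvPolynomial σ K) : Prop :=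
  p = 0 ∨ ∃ lam : MvPolynomial σ K → MvPolynomial σ K,
    p = ∑ g ∈ G, lam g * g ∧
    ∀ g ∈ G, lam g * g ≠ 0 → lm mo (lam g * g) ≼[mo] lm mo p


section Helpers

open scoped Classical

variable {m : MonomialOrder σ}

lemma toSyn_lm (p : MvPolynomial σ K) :
    m.toSyn (lm m p) = p.support.sup fun d => m.toSyn d := by
  simp [lm]

lemma lm_zero : lm m (0 : MvPolynomial σ K) = 0 := by
  simp [lm]

lemma lm_mem_support {p : MvPolynomial σ K} (hp : p ≠ 0) : lm m p ∈ p.support := by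
  obtain ⟨b, hb, hbe⟩ := Finset.exists_mem_eq_sup p.support
    (by simpa using hp) (fun d => m.toSyn d)
  have : lm m p = b := by rw [lm, hbe, AddEquiv.symm_apply_apply]
  rwa [this]

lemma lc_ne_zero {p : MvPolynomial σ K} (hp : p ≠ 0) : lc m p ≠ 0 := by
  simpa [lc, MvPolynomial.mem_support_iff] using lm_mem_support (m := m) hp

lemma le_lm_of_mem {p : MvPolynomial σ K} {d : σ →₀ ℕ} (hd : d ∈ p.support) :
    m.toSyn d ≤ m.toSyn (lm m p) := by
  rw [toSyn_lm]; exact Finset.le_sup hd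

lemma coeff_eq_zero_of_lm_lt {p : MvPolynomial σ K} {d : σ →₀ ℕ}
    (hd : m.toSyn (lm m p) < m.toSyn d) : p.coeff d = 0 := by
  by_contra hc
  exact absurd (le_lm_of_mem (MvPolynomial.mem_support_iff.mpr hc)) (not_le.mpr hd)

lemma lm_add_le (p q : MvPolynomial σ K) :
    m.toSyn (lm m (p + q)) ≤ max (m.toSyn (lm m p)) (m.toSyn (lm m q)) := by
  classical
  rw [toSyn_lm, toSyn_lm, toSyn_lm, ← Finset.sup_union]
  exact Finset.sup_mono (MvPolynomial.support_add)

lemma lm_monomial {e : σ →₀ ℕ} {c : K} (hc : c ≠ 0) :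
    lm m (MvPolynomial.monomial e c) = e := by
  classical
  rw [lm, MvPolynomial.support_monomial, if_neg hc, Finset.sup_singleton,
    AddEquiv.symm_apply_apply]


-- new material
lemma coeff_mul_lm_add_lm (p q : MvPolynomial σ K) :
    (p * q).coeff (lm m p + lm m q) = lc m p * lc m q := by
  classical
  rw [MvPolynomial.coeff_mul]
  rw [Finset.sum_eq_single (lm m p, lm m q)]
  · rfl
  · rintro ⟨u, v⟩ huv hne
    rw [Finset.HasAntidiagonal.mem_antidiagonal] at huv
    by_cases hu : m.toSyn (lm m p) < m.toSyn u
    · rw [coeff_eq_zero_of_lm_lt hu, zero_mul]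
    · have hv : m.toSyn (lm m q) < m.toSyn v := by
        have hs : m.toSyn u + m.toSyn v = m.toSyn (lm m p) + m.toSyn (lm m q) := by
          rw [← map_add, ← map_add, huv]
        rcases lt_or_eq_of_le (not_lt.mp hu) with h | h
        · exact lt_of_add_lt_add_left (by rw [hs]; exact add_lt_add_left h _)
        · exfalso
          have hu' : u = lm m p := m.toSyn.injective h
          have : v = lm m q := by
            apply m.toSyn.injective
            have := hs
            rw [hu'] at this
            exact add_left_cancel this
          exact hne (by rw [hu', this])
      rw [coeff_eq_zero_of_lm_lt hv, mul_zero]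
  · intro hmem
    exfalso
    exact hmem (Finset.HasAntidiagonal.mem_antidiagonal.mpr rfl)

lemma coeff_mul_eq_zero_of_lt {p q : MvPolynomial σ K} {e : σ →₀ ℕ}
    (he : m.toSyn (lm m p) + m.toSyn (lm m q) < m.toSyn e) :
    (p * q).coeff e = 0 := by
  classical
  rw [MvPolynomial.coeff_mul]
  apply Finset.sum_eq_zero
  rintro ⟨u, v⟩ huv
  rw [Finset.HasAntidiagonal.mem_antidiagonal] at huv
  have hs : m.toSyn u + m.toSyn v = m.toSyn e := by rw [← map_add, huv]
  by_cases hu : m.toSyn (lm m p) < m.toSyn u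
  · rw [coeff_eq_zero_of_lm_lt hu, zero_mul]
  · have hv : m.toSyn (lm m q) < m.toSyn v := by
      by_contra hv
      push_neg at hu hv
      exact absurd (hs ▸ add_le_add hu hv) (not_le.mpr he)
    rw [coeff_eq_zero_of_lm_lt hv, mul_zero]

lemma lm_mul {p q : MvPolynomial σ K} (hp : p ≠ 0) (hq : q ≠ 0) :
    lm m (p * q) = lm m p + lm m q := by
  have hne : (p * q).coeff (lm m p + lm m q) ≠ 0 := by
    rw [coeff_mul_lm_add_lm]
    exact mul_ne_zero (lc_ne_zero hp) (lc_ne_zero hq)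
  apply m.toSyn.injective
  apply le_antisymm
  · by_contra hlt
    push_neg at hlt
    rw [map_add] at hlt
    have := coeff_mul_eq_zero_of_lt (p := p) (q := q) (e := lm m (p * q)) hlt
    have hpq : p * q ≠ 0 := mul_ne_zero hp hq
    exact absurd this (by simpa [MvPolynomial.mem_support_iff] using lm_mem_support hpq)
  · exact le_lm_of_mem (MvPolynomial.mem_support_iff.mpr hne)

lemma lc_mul {p q : MvPolynomial σ K} (hp : p ≠ 0) (hq : q ≠ 0) :
    lc m (p * q) = lc m p * lc m q := by
  rw [lc, lm_mul hp hq, coeff_mul_lm_add_lm]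

lemma lc_monomial {e : σ →₀ ℕ} {c : K} (hc : c ≠ 0) :
    lc m (MvPolynomial.monomial e c) = c := by
  classical
  rw [lc, lm_monomial hc, MvPolynomial.coeff_monomial, if_pos rfl]

/-- the tail has strictly smaller degree -/
lemma lm_tail_lt {p : MvPolynomial σ K}
    (ht : p - MvPolynomial.monomial (lm m p) (lc m p) ≠ 0) :
    m.toSyn (lm m (p - MvPolynomial.monomial (lm m p) (lc m p))) < m.toSyn (lm m p) := by
  classical
  set t := p - MvPolynomial.monomial (lm m p) (lc m p) with hts
  have hmem := lm_mem_support (m := m) ht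
  rw [MvPolynomial.mem_support_iff] at hmem
  have hcoeff : ∀ u, m.toSyn (lm m p) ≤ m.toSyn u → t.coeff u = 0 := by
    intro u hu
    rcases lt_or_eq_of_le hu with h | h
    · have h1 : p.coeff u = 0 := coeff_eq_zero_of_lm_lt h
      have h2 : u ≠ lm m p := by rintro rfl; exact absurd h (lt_irrefl _)
      rw [hts, MvPolynomial.coeff_sub, h1, MvPolynomial.coeff_monomial,
        if_neg (Ne.symm h2), sub_zero]
    · have : u = lm m p := (m.toSyn.injective h.symm)
      simp [hts, this, MvPolynomial.coeff_sub, MvPolynomial.coeff_monomial, lc]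
  by_contra hc
  push_neg at hc
  exact hmem (hcoeff _ hc)


lemma spoly_lm_lt {p q : MvPolynomial σ K} (hp : p ≠ 0) (hq : q ≠ 0)
    (hS : Spoly m p q ≠ 0) :
    m.toSyn (lm m (Spoly m p q)) < m.toSyn (lm m p ⊔ lm m q) := by
  set γ := lm m p ⊔ lm m q with hγ
  set A := MvPolynomial.monomial (γ - lm m p) (lc m q) * p with hA
  set B := MvPolynomial.monomial (γ - lm m q) (lc m p) * q with hB
  have hmp : (MvPolynomial.monomial (γ - lm m p) (lc m q) : MvPolynomial σ K) ≠ 0 := by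
    rw [Ne, MvPolynomial.monomial_eq_zero]; exact lc_ne_zero hq
  have hmq : (MvPolynomial.monomial (γ - lm m q) (lc m p) : MvPolynomial σ K) ≠ 0 := by
    rw [Ne, MvPolynomial.monomial_eq_zero]; exact lc_ne_zero hp
  have hlmA : lm m A = γ := by
    rw [hA, lm_mul hmp hp, lm_monomial (lc_ne_zero hq),
      tsub_add_cancel_of_le (le_sup_left : lm m p ≤ γ)]
  have hlmB : lm m B = γ := by
    rw [hB, lm_mul hmq hq, lm_monomial (lc_ne_zero hp),
      tsub_add_cancel_of_le (le_sup_right : lm m q ≤ γ)]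
  have hkey : ∀ e : σ →₀ ℕ, m.toSyn γ ≤ m.toSyn e → (Spoly m p q).coeff e = 0 := by
    intro e he
    have hSAB : Spoly m p q = A - B := rfl
    rcases lt_or_eq_of_le he with h | h
    · rw [hSAB, MvPolynomial.coeff_sub,
        coeff_eq_zero_of_lm_lt (hlmA ▸ h), coeff_eq_zero_of_lm_lt (hlmB ▸ h), sub_zero]
    · have he' : e = γ := m.toSyn.injective h.symm
      have hcA : A.coeff γ = lc m q * lc m p := by
        have : A.coeff γ = lc m A := by rw [lc, hlmA]
        rw [this, hA, lc_mul hmp hp, lc_monomial (lc_ne_zero hq)]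
      have hcB : B.coeff γ = lc m p * lc m q := by
        have : B.coeff γ = lc m B := by rw [lc, hlmB]
        rw [this, hB, lc_mul hmq hq, lc_monomial (lc_ne_zero hp)]
      rw [hSAB, he', MvPolynomial.coeff_sub, hcA, hcB, mul_comm, sub_self]
  by_contra hc
  push_neg at hc
  have := hkey _ hc
  exact absurd this (by simpa [MvPolynomial.mem_support_iff] using lm_mem_support hS)

/-- key rewriting identity -/
lemma spoly_rewrite {p q : MvPolynomial σ K} (hp : p ≠ 0) (hq : q ≠ 0)
    {μ : σ →₀ ℕ} (hpμ : lm m p ≤ μ) (hqμ : lm m q ≤ μ) (c : K) :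
    MvPolynomial.monomial (μ - (lm m p ⊔ lm m q)) (c / lc m q) * Spoly m p q =
      MvPolynomial.monomial (μ - lm m p) c * p -
        MvPolynomial.monomial (μ - lm m q) (c * lc m p / lc m q) * q := by
  set γ := lm m p ⊔ lm m q with hγ
  have hγμ : γ ≤ μ := sup_le hpμ hqμ
  have h1 : μ - γ + (γ - lm m p) = μ - lm m p :=
    tsub_add_tsub_cancel hγμ (le_sup_left)
  have h2 : μ - γ + (γ - lm m q) = μ - lm m q :=
    tsub_add_tsub_cancel hγμ (le_sup_right)
  rw [Spoly, mul_sub, ← mul_assoc, ← mul_assoc,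
    MvPolynomial.monomial_mul, MvPolynomial.monomial_mul, h1, h2,
    div_mul_cancel₀ _ (lc_ne_zero hq)]
  congr 2
  field_simp


lemma key (m : MonomialOrder σ) (G : Finset (MvPolynomial σ K)) (hG0 : ∀ g ∈ G, g ≠ 0)
    (hspol : ∀ q ∈ G, ∀ q' ∈ G, HasStdRep m G (Spoly m q q'))
    (p : MvPolynomial σ K) (hp : p ≠ 0) :
    ∀ M : m.syn, ∀ N : ℕ, ∀ lam : MvPolynomial σ K → MvPolynomial σ K,
      p = ∑ g ∈ G, lam g * g →
      (∀ q ∈ G, lam q ≠ 0 → m.toSyn (lm m (lam q)) + m.toSyn (lm m q) ≤ M) →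
      (G.filter fun q => lam q ≠ 0 ∧
          m.toSyn (lm m (lam q)) + m.toSyn (lm m q) = M).card ≤ N →
      HasStdRep m G p := by
  intro M
  induction M using WellFoundedLT.induction with
  | _ M ihM =>
  intro N
  induction N using Nat.strong_induction_on with
  | _ N ihN =>
  intro lam hrep hbound hcard
  by_cases hM : M ≤ m.toSyn (lm m p)
  · -- case (a): already standard
    refine Or.inr ⟨lam, hrep, ?_⟩
    intro q hq hne
    have hlq : lam q ≠ 0 := fun h0 => hne (by rw [h0, zero_mul])
    have hq0 : q ≠ 0 := hG0 q hq
    rw [lm_mul hlq hq0, map_add]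
    exact le_trans (hbound q hq hlq) hM
  · push_neg at hM
    set F := G.filter fun q => lam q ≠ 0 ∧
        m.toSyn (lm m (lam q)) + m.toSyn (lm m q) = M with hF
    by_cases hFe : F = ∅
    · -- descent in M
      set M' := (G.filter fun q => lam q ≠ 0).sup
          (fun q => m.toSyn (lm m (lam q)) + m.toSyn (lm m q)) with hM'
      have hM'M : M' < M := by
        rcases (G.filter fun q => lam q ≠ 0).eq_empty_or_nonempty with he | hne
        · have h0 : ∀ q ∈ G, lam q = 0 := by
            intro q hq
            by_contra h
            have : q ∈ G.filter fun q => lam q ≠ 0 := Finset.mem_filter.mpr ⟨hq, h⟩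
            rw [he] at this
            exact absurd this (Finset.notMem_empty q)
          exact absurd (hrep.trans (Finset.sum_eq_zero fun q hq => by
            rw [h0 q hq, zero_mul])) hp
        · obtain ⟨q, hq, hqe⟩ := Finset.exists_mem_eq_sup _ hne
            (fun q => m.toSyn (lm m (lam q)) + m.toSyn (lm m q))
          obtain ⟨hqG, hlq⟩ := Finset.mem_filter.mp hq
          rw [hM', hqe]
          refine lt_of_le_of_ne (hbound q hqG hlq) fun hDq => ?_
          have : q ∈ F := Finset.mem_filter.mpr ⟨hqG, hlq, hDq⟩
          rw [hFe] at this
          exact absurd this (Finset.notMem_empty q)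
      refine ihM M' hM'M G.card lam hrep (fun q hq hlq => ?_) (Finset.card_filter_le _ _)
      exact Finset.le_sup (f := fun q => m.toSyn (lm m (lam q)) + m.toSyn (lm m q))
        (Finset.mem_filter.mpr ⟨hq, hlq⟩)
    · -- F nonempty: find two achievers
      have hFne : F.Nonempty := Finset.nonempty_of_ne_empty hFe
      have hF2 : 1 < F.card := by
        by_contra hlt
        push_neg at hlt
        have hc1 : F.card = 1 := le_antisymm hlt (Finset.card_pos.mpr hFne)
        obtain ⟨g₁, hFeq⟩ := Finset.card_eq_one.mp hc1
        have hg₁F : g₁ ∈ F := hFeq ▸ Finset.mem_singleton_self g₁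
        obtain ⟨hg₁G, hlam₁, hD₁⟩ := Finset.mem_filter.mp hg₁F
        set μ := m.toSyn.symm M with hμdef
        have hμ : m.toSyn μ = M := m.toSyn.apply_symm_apply M
        have hcoeffp : p.coeff μ = (lam g₁ * g₁).coeff μ := by
          rw [hrep, MvPolynomial.coeff_sum]
          refine Finset.sum_eq_single g₁ (fun q hq hne => ?_) (fun h => absurd hg₁G h)
          by_cases hlq : lam q = 0
          · rw [hlq, zero_mul, MvPolynomial.coeff_zero]
          · refine coeff_eq_zero_of_lm_lt (m := m) ?_
            rw [lm_mul hlq (hG0 q hq), map_add, hμ]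
            refine lt_of_le_of_ne (hbound q hq hlq) fun hDq => ?_
            have : q ∈ F := Finset.mem_filter.mpr ⟨hq, hlq, hDq⟩
            rw [hFeq] at this
            exact hne (Finset.mem_singleton.mp this)
        have hlm₁ : lm m (lam g₁ * g₁) = μ := by
          apply m.toSyn.injective
          rw [lm_mul hlam₁ (hG0 g₁ hg₁G), map_add, hμ, hD₁]
        have hne0 : p.coeff μ ≠ 0 := by
          rw [hcoeffp, ← hlm₁]
          exact lc_ne_zero (mul_ne_zero hlam₁ (hG0 g₁ hg₁G))
        exact hne0 (coeff_eq_zero_of_lm_lt (by rw [hμ]; exact hM))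
      obtain ⟨g₁, hg₁F, g₂, hg₂F, hgne⟩ := Finset.one_lt_card.mp hF2
      obtain ⟨hg₁G, hlam₁, hD₁⟩ := Finset.mem_filter.mp hg₁F
      obtain ⟨hg₂G, hlam₂, hD₂⟩ := Finset.mem_filter.mp hg₂F
      have hg₁0 : g₁ ≠ 0 := hG0 g₁ hg₁G
      have hg₂0 : g₂ ≠ 0 := hG0 g₂ hg₂G
      set a := lm m g₁ with haeq
      set b := lm m g₂ with hbeq0
      set d := lm m (lam g₁) with hd
      set dl := lm m (lam g₂) with hdl'
      set c := lc m (lam g₁) with hc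
      have hc0 : c ≠ 0 := lc_ne_zero hlam₁
      set μ := d + a with hμdef
      have hμM : m.toSyn μ = M := by rw [hμdef, map_add]; exact hD₁
      have hdlb : dl + b = μ := by
        apply m.toSyn.injective
        rw [map_add, hμM]
        exact hD₂
      have haμ : a ≤ μ := by rw [hμdef]; exact le_add_self
      have hbμ : b ≤ μ := by rw [← hdlb]; exact le_add_self
      set γ := a ⊔ b with hγ
      have hγμ : γ ≤ μ := sup_le haμ hbμ
      set e' := c * lc m g₁ / lc m g₂ with he'
      have he'0 : e' ≠ 0 := by
        rw [he']
        exact div_ne_zero (mul_ne_zero hc0 (lc_ne_zero hg₁0)) (lc_ne_zero hg₂0)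
      set c' := c / lc m g₂ with hc'
      have hc'0 : c' ≠ 0 := div_ne_zero hc0 (lc_ne_zero hg₂0)
      have hμa : μ - a = d := by rw [hμdef]; ext i; simp
      have hμb : μ - b = dl := by rw [← hdlb]; ext i; simp
      have hrw : MvPolynomial.monomial (μ - γ) c' * Spoly m g₁ g₂ =
          MvPolynomial.monomial d c * g₁ - MvPolynomial.monomial dl e' * g₂ := by
        rw [hc', he', ← hμa, ← hμb]
        exact spoly_rewrite hg₁0 hg₂0 haμ hbμ c
      -- S-polynomial standard representation
      obtain ⟨sp, hsp1, hsp2⟩ :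
          ∃ sp : MvPolynomial σ K → MvPolynomial σ K,
            Spoly m g₁ g₂ = ∑ q ∈ G, sp q * q ∧
            ∀ q ∈ G, sp q ≠ 0 →
              m.toSyn (lm m (sp q)) + m.toSyn (lm m q) < m.toSyn γ := by
        by_cases hS : Spoly m g₁ g₂ = 0
        · exact ⟨fun _ => 0, by simp [hS], fun q hq hsq => absurd rfl hsq⟩
        · obtain ⟨sp, hsp1, hsp2⟩ := (hspol g₁ hg₁G g₂ hg₂G).resolve_left hS
          refine ⟨sp, hsp1, fun q hq hsq => ?_⟩
          have hq0 : q ≠ 0 := hG0 q hq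
          have := hsp2 q hq (mul_ne_zero hsq hq0)
          rw [lm_mul hsq hq0, map_add] at this
          exact lt_of_le_of_lt this (spoly_lm_lt hg₁0 hg₂0 hS)
      -- the new representation
      set sml : MvPolynomial σ K → MvPolynomial σ K :=
        fun q => MvPolynomial.monomial (μ - γ) c' * sp q with hsml
      set base : MvPolynomial σ K → MvPolynomial σ K :=
        fun q => lam q + (if q = g₁ then -(MvPolynomial.monomial d c) else 0)
          + (if q = g₂ then MvPolynomial.monomial dl e' else 0) with hbase
      set lam' : MvPolynomial σ K → MvPolynomial σ K := fun q => base q + sml q with hlam'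
      have hμγγ : μ - γ + γ = μ := tsub_add_cancel_of_le hγμ
      have hsml_lt : ∀ q ∈ G, sml q ≠ 0 →
          m.toSyn (lm m (sml q)) + m.toSyn (lm m q) < M := by
        intro q hq hs
        have hsq : sp q ≠ 0 := fun h0 => hs (by rw [hsml]; simp [h0])
        have hmono : (MvPolynomial.monomial (μ - γ) c' : MvPolynomial σ K) ≠ 0 := by
          rw [Ne, MvPolynomial.monomial_eq_zero]; exact hc'0
        rw [hsml]
        simp only
        rw [lm_mul hmono hsq, lm_monomial hc'0, map_add, add_assoc]
        calc m.toSyn (μ - γ) + (m.toSyn (lm m (sp q)) + m.toSyn (lm m q))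
            < m.toSyn (μ - γ) + m.toSyn γ := add_lt_add_right (hsp2 q hq hsq) _
          _ = M := by rw [← map_add, hμγγ, hμM]
      have hbase_le : ∀ q ∈ G, base q ≠ 0 →
          m.toSyn (lm m (base q)) + m.toSyn (lm m q) ≤ M := by
        intro q hq hb
        by_cases h1 : q = g₁
        · subst h1
          have hbeq : base q = lam q - MvPolynomial.monomial d c := by
            simp [hbase, hgne, sub_eq_add_neg]
          rw [hbeq] at hb ⊢
          have := lm_tail_lt (p := lam q) (by rw [← hd, ← hc]; exact hb)
          rw [← hd, ← hc] at this
          calc m.toSyn (lm m (lam q - MvPolynomial.monomial d c)) + m.toSyn (lm m q)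
              ≤ m.toSyn d + m.toSyn (lm m q) := add_le_add_left this.le _
            _ = M := by rw [← haeq]; exact hD₁
        · by_cases h2 : q = g₂
          · subst h2
            have hbeq : base q = lam q + MvPolynomial.monomial dl e' := by
              simp [hbase, h1]
            rw [hbeq]
            have hmax := lm_add_le (m := m) (lam q) (MvPolynomial.monomial dl e')
            rw [lm_monomial he'0] at hmax
            have hmax' : m.toSyn (lm m (lam q + MvPolynomial.monomial dl e')) ≤
                m.toSyn dl := by
              rw [← hdl'] at hmax
              simpa using hmax
            calc m.toSyn (lm m (lam q + MvPolynomial.monomial dl e')) + m.toSyn (lm m q)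
                ≤ m.toSyn dl + m.toSyn (lm m q) := add_le_add_left hmax' _
              _ = M := by rw [← hbeq0]; exact hD₂
          · have hbeq : base q = lam q := by
              simp only [hbase, if_neg h1, if_neg h2]; ring
            rw [hbeq] at hb ⊢
            exact hbound q hq hb
      have hbase_lt₁ : base g₁ ≠ 0 →
          m.toSyn (lm m (base g₁)) + m.toSyn (lm m g₁) < M := by
        intro hb
        have hbeq : base g₁ = lam g₁ - MvPolynomial.monomial d c := by
          simp [hbase, hgne, sub_eq_add_neg]
        rw [hbeq] at hb ⊢
        have := lm_tail_lt (p := lam g₁) (by rw [← hd, ← hc]; exact hb)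
        rw [← hd, ← hc] at this
        calc m.toSyn (lm m (lam g₁ - MvPolynomial.monomial d c)) + m.toSyn (lm m g₁)
            < m.toSyn d + m.toSyn (lm m g₁) := add_lt_add_left this _
          _ = M := by rw [← haeq]; exact hD₁
      have hbase_ach : ∀ q ∈ G, base q ≠ 0 →
          m.toSyn (lm m (base q)) + m.toSyn (lm m q) = M → q ∈ F ∧ q ≠ g₁ := by
        intro q hq hb hDq
        by_cases h1 : q = g₁
        · subst h1
          exact absurd hDq (ne_of_lt (hbase_lt₁ hb))
        · refine ⟨?_, h1⟩
          by_cases h2 : q = g₂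
          · subst h2; exact hg₂F
          · have hbeq : base q = lam q := by
              simp only [hbase, if_neg h1, if_neg h2]; ring
            rw [hbeq] at hb hDq
            exact Finset.mem_filter.mpr ⟨hq, hb, hDq⟩
      -- new representation sums to p
      have hrep' : p = ∑ q ∈ G, lam' q * q := by
        have hsum1 : ∑ q ∈ G, sml q * q =
            MvPolynomial.monomial d c * g₁ - MvPolynomial.monomial dl e' * g₂ := by
          rw [← hrw, hsp1, Finset.mul_sum]
          exact Finset.sum_congr rfl fun q hq => by rw [hsml]; ring
        have hsum2 : ∑ q ∈ G, (if q = g₁ then -(MvPolynomial.monomial d c) else 0) * q =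
            -(MvPolynomial.monomial d c) * g₁ := by
          have hstep : ∀ q ∈ G, (if q = g₁ then -(MvPolynomial.monomial d c) else 0) * q =
              if q = g₁ then -(MvPolynomial.monomial d c) * q else 0 := by
            intro q _
            split <;> simp
          rw [Finset.sum_congr rfl hstep,
            Finset.sum_ite_eq' G g₁ (fun q => -(MvPolynomial.monomial d c) * q),
            if_pos hg₁G]
        have hsum3 : ∑ q ∈ G, (if q = g₂ then MvPolynomial.monomial dl e' else 0) * q =
            MvPolynomial.monomial dl e' * g₂ := by
          have hstep : ∀ q ∈ G, (if q = g₂ then (MvPolynomial.monomial dl e' :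
              MvPolynomial σ K) else 0) * q =
              if q = g₂ then MvPolynomial.monomial dl e' * q else 0 := by
            intro q _
            split <;> simp
          rw [Finset.sum_congr rfl hstep,
            Finset.sum_ite_eq' G g₂ (fun q => (MvPolynomial.monomial dl e' :
              MvPolynomial σ K) * q), if_pos hg₂G]
        calc p = (∑ q ∈ G, lam q * q)
              + (∑ q ∈ G, (if q = g₁ then -(MvPolynomial.monomial d c) else 0) * q)
              + (∑ q ∈ G, (if q = g₂ then MvPolynomial.monomial dl e' else 0) * q)
              + (∑ q ∈ G, sml q * q) := by
              rw [← hrep, hsum1, hsum2, hsum3]; ring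
          _ = ∑ q ∈ G, lam' q * q := by
              rw [← Finset.sum_add_distrib, ← Finset.sum_add_distrib,
                ← Finset.sum_add_distrib]
              exact Finset.sum_congr rfl fun q hq => by rw [hlam', hbase]; ring
      -- bounds for the new representation
      have hbound' : ∀ q ∈ G, lam' q ≠ 0 →
          m.toSyn (lm m (lam' q)) + m.toSyn (lm m q) ≤ M := by
        intro q hq hl
        by_cases hb0 : base q = 0
        · by_cases hs0 : sml q = 0
          · exact absurd (by rw [hlam']; simp [hb0, hs0]) hl
          · have : lam' q = sml q := by rw [hlam']; simp [hb0]
            rw [this]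
            exact (hsml_lt q hq hs0).le
        · by_cases hs0 : sml q = 0
          · have : lam' q = base q := by rw [hlam']; simp [hs0]
            rw [this]
            exact hbase_le q hq hb0
          · have hmax := lm_add_le (m := m) (base q) (sml q)
            have : lam' q = base q + sml q := rfl
            rw [this]
            calc m.toSyn (lm m (base q + sml q)) + m.toSyn (lm m q)
                ≤ max (m.toSyn (lm m (base q))) (m.toSyn (lm m (sml q)))
                  + m.toSyn (lm m q) := add_le_add_left hmax _
              _ = max (m.toSyn (lm m (base q)) + m.toSyn (lm m q))
                  (m.toSyn (lm m (sml q)) + m.toSyn (lm m q)) :=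
                  (max_add_add_right _ _ _).symm
              _ ≤ M := max_le (hbase_le q hq hb0) (hsml_lt q hq hs0).le
      -- achievers decrease
      have hach : ∀ q ∈ G, lam' q ≠ 0 →
          m.toSyn (lm m (lam' q)) + m.toSyn (lm m q) = M → q ∈ F ∧ q ≠ g₁ := by
        intro q hq hl hDq
        by_cases hb0 : base q = 0
        · by_cases hs0 : sml q = 0
          · exact absurd (by rw [hlam']; simp [hb0, hs0]) hl
          · have heq : lam' q = sml q := by rw [hlam']; simp [hb0]
            rw [heq] at hDq
            exact absurd hDq (ne_of_lt (hsml_lt q hq hs0))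
        · by_cases hs0 : sml q = 0
          · have heq : lam' q = base q := by rw [hlam']; simp [hs0]
            rw [heq] at hDq
            exact hbase_ach q hq hb0 hDq
          · have hmax := lm_add_le (m := m) (base q) (sml q)
            have heq : lam' q = base q + sml q := rfl
            rw [heq] at hDq
            have hle : M ≤ max (m.toSyn (lm m (base q)) + m.toSyn (lm m q))
                (m.toSyn (lm m (sml q)) + m.toSyn (lm m q)) := by
              rw [← hDq, max_add_add_right]
              exact add_le_add_left hmax _
            have hbM : m.toSyn (lm m (base q)) + m.toSyn (lm m q) = M := by
              rcases le_max_iff.mp hle with h | h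
              · exact le_antisymm (hbase_le q hq hb0) h
              · exact absurd h (not_le.mpr (hsml_lt q hq hs0))
            exact hbase_ach q hq hb0 hbM
      -- cardinality bookkeeping
      have hNpos : 0 < N := lt_of_lt_of_le (Finset.card_pos.mpr hFne) hcard
      refine ihN (N - 1) (Nat.sub_lt hNpos one_pos) lam' hrep' hbound' ?_
      have hsub : (G.filter fun q => lam' q ≠ 0 ∧
          m.toSyn (lm m (lam' q)) + m.toSyn (lm m q) = M) ⊆ F.erase g₁ := by
        intro q hqmem
        obtain ⟨hqG, hl, hDq⟩ := Finset.mem_filter.mp hqmem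
        obtain ⟨hqF, hqne⟩ := hach q hqG hl hDq
        exact Finset.mem_erase.mpr ⟨hqne, hqF⟩
      calc (G.filter fun q => lam' q ≠ 0 ∧
            m.toSyn (lm m (lam' q)) + m.toSyn (lm m q) = M).card
          ≤ (F.erase g₁).card := Finset.card_le_card hsub
        _ = F.card - 1 := Finset.card_erase_of_mem hg₁F
        _ ≤ N - 1 := Nat.sub_le_sub_right hcard 1


end Helpers

set_option maxHeartbeats 2000000 in
/-- Cancellation-of-leading-terms rewriting: if `p = ∑_{k ∈ s} h k * g k` with each
`g k ∈ G`, every summand whose monomial `lm (h k) * lm (g k)` exceeds `lm p` is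
cancelled by another summand with the same monomial, and every S-polynomial of
elements of `G` has a standard representation w.r.t. `G`, then `p` has a standard
representation w.r.t. `G`. -/
theorem stdRep_of_cancelling_representation {n : ℕ} (mo : MonomialOrder (Fin n))
    {K : Type*} [Field K] {ι : Type*}
    (G : Finset (MvPolynomial (Fin n) K)) (hG0 : ∀ g ∈ G, g ≠ 0)
    (p : MvPolynomial (Fin n) K) (hp : p ≠ 0)
    (s : Finset ι) (h : ι → MvPolynomial (Fin n) K) (g : ι → MvPolynomial (Fin n) K)
    (hgG : ∀ k ∈ s, g k ∈ G)
    (hrep : p = ∑ k ∈ s, h k * g k)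
    (hcancel : ∀ k ∈ s, h k ≠ 0 → (lm mo p ≺[mo] lm mo (h k) + lm mo (g k)) →
      ∃ l ∈ s, l ≠ k ∧ h l ≠ 0 ∧ lm mo (h l) + lm mo (g l) = lm mo (h k) + lm mo (g k))
    (hspol : ∀ q ∈ G, ∀ q' ∈ G, HasStdRep mo G (Spoly mo q q')) :
    HasStdRep mo G p := by
  classical
  apply key mo G hG0 hspol p hp
    (G.sup (fun q => mo.toSyn (lm mo (∑ k ∈ s.filter (fun k => g k = q), h k)) +
        mo.toSyn (lm mo q)))
    _ (fun q => ∑ k ∈ s.filter (fun k => g k = q), h k)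
  · rw [hrep, ← Finset.sum_fiberwise_of_maps_to hgG (fun k => h k * g k)]
    refine Finset.sum_congr rfl fun q hq => ?_
    rw [Finset.sum_mul]
    refine Finset.sum_congr rfl fun k hk => ?_
    rw [(Finset.mem_filter.mp hk).2]
  · intro q hq _
    exact Finset.le_sup (f := fun q => mo.toSyn (lm mo (∑ k ∈ s.filter (fun k => g k = q), h k)) +
      mo.toSyn (lm mo q)) hq
  · exact le_rfl
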